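/- Higher logarithmic derivatives of cyclotomic-unit power series give zeta values: let a, b be nonzero rational numbers, set S_c := exp(c·z/2) − exp(−c·z/2) in ℚ⟦z⟧ for c ∈ ℚ, and suppose G ∈ ℚ⟦z⟧ satisfies S_a′·S_b − S_a·S_b′ = G·S_a·S_b. Then for every even integer k ≥ 2, the value (k−1)! times the coefficient of z^{k−1} in G, regarded as a complex number, equals (b^k − a^k)·ζ(1−k), where ζ is the Riemann zeta function; equivalently, the (k−1)-st derivative at z = 0 of the logarithmic derivative of F = S_a/S_b equals (b^k − a^k)·ζ(1−k). -/

import Mathlib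

open PowerSeries

/-- `S_c = exp(c·z/2) − exp(−c·z/2)` as a formal power series over `ℚ`. -/
noncomputable def Ssin (c : ℚ) : PowerSeries ℚ :=
  rescale (c / 2) (exp ℚ) - rescale (-(c / 2)) (exp ℚ)

lemma deriv_rescale_exp (c : ℚ) :
    (d⁄dX ℚ) (rescale c (exp ℚ)) = C c * rescale c (exp ℚ) := by
  ext n
  rw [coeff_derivative, coeff_C_mul, coeff_rescale, coeff_rescale, coeff_exp, coeff_exp]
  simp only [Algebra.algebraMap_self, RingHom.id_apply]
  rw [Nat.factorial_succ, pow_succ]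
  push_cast
  field_simp

lemma Ssin_factor (c : ℚ) :
    Ssin c = rescale (-(c/2)) (exp ℚ) * (rescale c (exp ℚ) - 1) := by
  rw [Ssin, mul_sub, mul_one, exp_mul_exp_eq_exp_add]
  rw [show -(c/2) + c = c/2 by ring]

lemma deriv_Ssin (c : ℚ) :
    (d⁄dX ℚ) (Ssin c)
      = C (c/2) * (rescale (c/2) (exp ℚ) + rescale (-(c/2)) (exp ℚ)) := by
  rw [Ssin, map_sub, deriv_rescale_exp, deriv_rescale_exp, map_neg]
  ring

noncomputable def Lser (c : ℚ) : PowerSeries ℚ :=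
  rescale c (bernoulliPowerSeries ℚ) + C (c/2) * X

lemma Lser_mul_Ssin (c : ℚ) : Lser c * Ssin c = X * (d⁄dX ℚ) (Ssin c) := by
  have h1 : rescale c (bernoulliPowerSeries ℚ) * (rescale c (exp ℚ) - 1)
      = C c * X := by
    rw [← rescale_X c, ← map_one (rescale c), ← map_sub, ← map_mul,
      bernoulliPowerSeries_mul_exp_sub_one, rescale_X]
  have e : rescale (-(c/2)) (exp ℚ) * rescale c (exp ℚ) = rescale (c/2) (exp ℚ) := by
    rw [exp_mul_exp_eq_exp_add, show -(c/2) + c = c/2 by ring]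
  have hc : C c = C (c/2) + C (c/2) := by rw [← map_add]; norm_num
  rw [deriv_Ssin, Lser, Ssin_factor]
  linear_combination (rescale (-(c/2)) (exp ℚ)) * h1 + (C (c/2)) * X * e
    + X * (rescale (-(c/2)) (exp ℚ)) * hc

lemma Ssin_ne_zero {c : ℚ} (hc : c ≠ 0) : Ssin c ≠ 0 := by
  intro h
  have := congrArg (coeff 1) h
  rw [Ssin, map_sub, coeff_rescale, coeff_rescale, coeff_exp] at this
  simp at this
  apply hc
  linarith

/-- **Higher logarithmic derivatives of cyclotomic-unit power series give zeta values**. -/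
theorem log_deriv_coeff_eq_zeta_value (a b : ℚ) (ha : a ≠ 0) (hb : b ≠ 0)
    (G : PowerSeries ℚ)
    (hG : (d⁄dX ℚ) (Ssin a) * Ssin b - Ssin a * (d⁄dX ℚ) (Ssin b)
        = G * Ssin a * Ssin b) :
    ∀ k : ℕ, 2 ≤ k → Even k →
      (((k - 1).factorial : ℂ) * ((coeff (k - 1) G : ℚ) : ℂ))
        = ((b : ℂ) ^ k - (a : ℂ) ^ k) * riemannZeta (1 - (k : ℂ)) := by
  have key : G * X = Lser a - Lser b := by
    have hP : Ssin a * Ssin b ≠ 0 := mul_ne_zero (Ssin_ne_zero ha) (Ssin_ne_zero hb)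
    apply mul_right_cancel₀ hP
    have := congrArg (fun f => X * f) hG
    simp only [mul_sub] at this
    calc G * X * (Ssin a * Ssin b) = X * (G * Ssin a * Ssin b) := by ring
      _ = X * ((d⁄dX ℚ) (Ssin a) * Ssin b) - X * (Ssin a * ((d⁄dX ℚ) (Ssin b))) := by
          rw [← hG]; ring
      _ = (Lser a - Lser b) * (Ssin a * Ssin b) := by
          rw [← mul_assoc X, ← Lser_mul_Ssin a]
          rw [show X * (Ssin a * (d⁄dX ℚ) (Ssin b)) = (X * (d⁄dX ℚ) (Ssin b)) * Ssin a by ring,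
            ← Lser_mul_Ssin b]
          ring
  intro k hk hke
  obtain ⟨m, rfl⟩ : ∃ m, k = m + 2 := ⟨k - 2, by omega⟩
  have hk1 : m + 2 - 1 = m + 1 := rfl
  have hcoeff : coeff (m + 1) G = coeff (m + 2) (Lser a - Lser b) := by
    rw [← coeff_succ_mul_X, key]
  have hLc : ∀ c : ℚ, coeff (m + 2) (Lser c) = c ^ (m + 2) * (bernoulli (m + 2) / ((m + 2).factorial : ℚ)) := by
    intro c
    rw [Lser, map_add, coeff_rescale, coeff_C_mul, coeff_X]
    simp [bernoulliPowerSeries]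
  have hQ : coeff (m + 1) G
      = (a ^ (m + 2) - b ^ (m + 2)) * (bernoulli (m + 2) / ((m + 2).factorial : ℚ)) := by
    rw [hcoeff, map_sub, hLc, hLc]; ring
  -- zeta value
  have hz : riemannZeta (1 - ((m + 2 : ℕ) : ℂ))
      = (-1 : ℂ) * (bernoulli (m + 2) : ℂ) / (m + 2) := by
    have h1 : (1 : ℂ) - ((m + 2 : ℕ) : ℂ) = -((m + 1 : ℕ) : ℂ) := by push_cast; ring
    rw [h1, riemannZeta_neg_nat_eq_bernoulli]
    have hodd : Odd (m + 1) := by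
      rcases hke with ⟨t, ht⟩
      exact ⟨t - 1, by omega⟩
    rw [hodd.neg_one_pow]
    push_cast
    ring_nf
  rw [hk1, hQ, hz]
  have hfac : (((m + 2).factorial : ℕ) : ℂ) = (((m + 1).factorial : ℕ) : ℂ) * ((m : ℂ) + 2) := by
    rw [Nat.factorial_succ (m + 1)]; push_cast; ring
  push_cast
  rw [hfac]
  have h2 : ((m : ℂ) + 2) ≠ 0 := by
    intro h; have := congrArg Complex.re h; simp at this; linarith
  have h3 : (((m + 1).factorial : ℕ) : ℂ) ≠ 0 := by
    exact_mod_cast Nat.factorial_ne_zero (m + 1)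
  field_simp
  ring
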